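/- Let f be a monic polynomial of degree d over a field 𝕜 with f(0) ≠ 0 and f(1) ≠ 0. Define f^{(2)}(t) = f(1)^{−1} (t−1)^d f(t/(t−1)). Then f^{(2)} is a monic polynomial of degree d with f^{(2)}(0) ≠ 0 and f^{(2)}(1) ≠ 0, and (f^{(2)})^{(2)} = f. -/

import Mathlib

open Polynomial

/-- The transformation `f ↦ f^{(2)}`, `f^{(2)}(t) = f(1)⁻¹ (t−1)^d f(t/(t−1))`, interpreted
as `f(1)⁻¹ ∑ aᵢ tⁱ (t−1)^{d−i}` where `f = ∑ aᵢ tⁱ` and `d = deg f`. -/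
noncomputable def trans2 {𝕜 : Type*} [Field 𝕜] (f : Polynomial 𝕜) : Polynomial 𝕜 :=
  (f.eval 1)⁻¹ • (Finset.range (f.natDegree + 1)).sum
    (fun i => C (f.coeff i) * X ^ i * (X - 1) ^ (f.natDegree - i))

section Helpers

section
variable {𝕜 : Type*} [Field 𝕜] (f : Polynomial 𝕜)

noncomputable def T : Polynomial 𝕜 :=
  (Finset.range (f.natDegree + 1)).sum
    (fun i => C (f.coeff i) * X ^ i * (X - 1) ^ (f.natDegree - i))

lemma T_natDegree_le : (T f).natDegree ≤ f.natDegree := by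
  refine (Polynomial.natDegree_sum_le _ _).trans ?_
  rw [Finset.fold_max_le]
  refine ⟨Nat.zero_le _, fun i hi => ?_⟩
  rw [Finset.mem_range, Nat.lt_succ_iff] at hi
  refine (natDegree_mul_le).trans ?_
  have h1 : (X - 1 : Polynomial 𝕜).natDegree ≤ 1 := by
    simpa using natDegree_X_sub_C (1 : 𝕜) ▸ le_rfl
  calc (C (f.coeff i) * X ^ i).natDegree + ((X - 1 : Polynomial 𝕜) ^ (f.natDegree - i)).natDegree
      ≤ (0 + i) + (f.natDegree - i) * 1 := by
        refine add_le_add ((natDegree_mul_le).trans (add_le_add (natDegree_C _).le (natDegree_X_pow _).le)) ?_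
        exact natDegree_pow_le.trans (Nat.mul_le_mul_left _ h1)
    _ ≤ f.natDegree := by omega

lemma monic_term (i : ℕ) (hi : i ≤ f.natDegree) :
    (X ^ i * (X - 1 : Polynomial 𝕜) ^ (f.natDegree - i)).Monic ∧
    (X ^ i * (X - 1 : Polynomial 𝕜) ^ (f.natDegree - i)).natDegree = f.natDegree := by
  have hm1 : (X - 1 : Polynomial 𝕜).Monic := by
    simpa using monic_X_sub_C (1 : 𝕜)
  have hm : (X ^ i * (X - 1 : Polynomial 𝕜) ^ (f.natDegree - i)).Monic :=
    (monic_X_pow i).mul (hm1.pow _)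
  refine ⟨hm, ?_⟩
  rw [Monic.natDegree_mul (monic_X_pow i) (hm1.pow _), natDegree_X_pow,
    Monic.natDegree_pow hm1]
  have : (X - 1 : Polynomial 𝕜).natDegree = 1 := by simpa using natDegree_X_sub_C (1 : 𝕜)
  rw [this]; omega

lemma T_coeff_top : (T f).coeff f.natDegree = f.eval 1 := by
  rw [T, finset_sum_coeff]
  rw [eval_eq_sum_range]
  refine Finset.sum_congr rfl fun i hi => ?_
  rw [Finset.mem_range, Nat.lt_succ_iff] at hi
  obtain ⟨hm, hd⟩ := monic_term f i hi
  rw [mul_assoc, coeff_C_mul, one_pow, mul_one]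
  have := hm.coeff_natDegree
  rw [hd] at this
  rw [this, mul_one]

lemma T_eval_one : (T f).eval 1 = f.leadingCoeff := by
  rw [T, eval_finset_sum]
  rw [Finset.sum_eq_single f.natDegree]
  · rw [Nat.sub_self, pow_zero, mul_one, eval_mul, eval_C, eval_pow, eval_X, one_pow, mul_one, leadingCoeff]
  · intro i hi hne
    rw [Finset.mem_range, Nat.lt_succ_iff] at hi
    have : f.natDegree - i ≠ 0 := by omega
    simp only [eval_mul, eval_pow, eval_C, eval_X, eval_sub, eval_one, sub_self]
    rw [zero_pow this, mul_zero]
  · simp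
  
lemma T_eval_zero : (T f).eval 0 = f.eval 0 * (-1) ^ f.natDegree := by
  rw [T, eval_finset_sum]
  rw [Finset.sum_eq_single 0]
  · simp [coeff_zero_eq_eval_zero]
  · intro i hi hne
    simp [zero_pow hne]
  · simp
end

lemma trans2_eq {𝕜 : Type*} [Field 𝕜] (f : Polynomial 𝕜) :
    trans2 f = (f.eval 1)⁻¹ • T f := rfl

lemma key_sum {𝕜 K : Type*} [Field 𝕜] [Field K] [Algebra 𝕜 K]
    (f : Polynomial 𝕜) (d : ℕ) (hd : f.natDegree ≤ d) (z : K) (hz : z - 1 ≠ 0) :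
    ∑ i ∈ Finset.range (d+1), algebraMap 𝕜 K (f.coeff i) * z ^ i * (z - 1) ^ (d - i)
      = (z - 1) ^ d * Polynomial.aeval (z / (z - 1)) f := by
  rw [Polynomial.aeval_eq_sum_range' (Nat.lt_succ_of_le hd), Finset.mul_sum]
  refine Finset.sum_congr rfl fun i hi => ?_
  rw [Finset.mem_range, Nat.lt_succ_iff] at hi
  rw [Algebra.smul_def, div_pow]
  have h1 : (z - 1) ^ d = (z - 1) ^ (d - i) * (z - 1) ^ i := by
    rw [← pow_add]; congr 1; omega
  rw [h1]
  field_simp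

lemma aeval_trans2 {𝕜 K : Type*} [Field 𝕜] [Field K] [Algebra 𝕜 K]
    (f : Polynomial 𝕜) (z : K) (hz : z - 1 ≠ 0) :
    Polynomial.aeval z (trans2 f)
      = algebraMap 𝕜 K (f.eval 1)⁻¹ *
        ((z - 1) ^ f.natDegree * Polynomial.aeval (z / (z - 1)) f) := by
  rw [trans2, map_smul, Algebra.smul_def, map_sum]
  congr 1
  rw [← key_sum f f.natDegree le_rfl z hz]
  refine Finset.sum_congr rfl fun i hi => ?_
  simp [map_mul, map_pow]

end Helpers

/-- For a monic polynomial `f` of degree `d` with `f(0) ≠ 0` and `f(1) ≠ 0`, the polynomial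
`f^{(2)}` is monic of degree `d`, does not vanish at `0` or `1`, and `(f^{(2)})^{(2)} = f`. -/
theorem trans2_involution
    (𝕜 : Type*) [Field 𝕜] (f : Polynomial 𝕜)
    (hf : f.Monic) (h0 : f.eval 0 ≠ 0) (h1 : f.eval 1 ≠ 0) :
    (trans2 f).Monic ∧ (trans2 f).natDegree = f.natDegree ∧
    (trans2 f).eval 0 ≠ 0 ∧ (trans2 f).eval 1 ≠ 0 ∧ trans2 (trans2 f) = f := by
  set d := f.natDegree with hd
  set g := trans2 f with hg
  have hcoeff : g.coeff d = 1 := by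
    rw [hg, trans2_eq, coeff_smul, T_coeff_top, smul_eq_mul, inv_mul_cancel₀ h1]
  have hle : g.natDegree ≤ d := (natDegree_smul_le _ _).trans (T_natDegree_le f)
  have hmonic : g.Monic := monic_of_natDegree_le_of_coeff_eq_one d hle hcoeff
  have hdeg : g.natDegree = d :=
    le_antisymm hle (le_natDegree_of_ne_zero (hcoeff ▸ one_ne_zero))
  have hg1 : g.eval 1 = (f.eval 1)⁻¹ := by
    rw [hg, trans2_eq, eval_smul, T_eval_one, hf.leadingCoeff, smul_eq_mul, mul_one]
  have hg1' : g.eval 1 ≠ 0 := hg1 ▸ inv_ne_zero h1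
  have hg0 : g.eval 0 ≠ 0 := by
    rw [hg, trans2_eq, eval_smul, T_eval_zero, smul_eq_mul]
    exact mul_ne_zero (inv_ne_zero h1) (mul_ne_zero h0 (pow_ne_zero _ (by norm_num)))
  refine ⟨hmonic, hdeg, hg0, hg1', ?_⟩
  -- involution via rational functions
  apply RatFunc.algebraMap_injective 𝕜
  set K := RatFunc 𝕜
  set z : K := RatFunc.X with hzdef
  have hφ : ∀ p : Polynomial 𝕜, algebraMap (Polynomial 𝕜) K p = Polynomial.aeval z p := by
    intro p
    rw [hzdef, ← RatFunc.algebraMap_X, aeval_algebraMap_apply, aeval_X_left_apply]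
  have hz1 : z - 1 ≠ 0 := by
    have : (X - 1 : Polynomial 𝕜) ≠ 0 := by
      simpa using X_sub_C_ne_zero (1 : 𝕜)
    intro h
    apply this
    apply RatFunc.algebraMap_injective 𝕜
    rw [map_sub, map_one, RatFunc.algebraMap_X, ← hzdef, h, map_zero]
  set w : K := z / (z - 1) with hwdef
  have hw1 : w - 1 = (z - 1)⁻¹ := by
    rw [hwdef]
    rw [div_sub_one hz1, sub_sub_cancel, one_div]
  have hw1' : w - 1 ≠ 0 := by rw [hw1]; exact inv_ne_zero hz1
  have hww : w / (w - 1) = z := by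
    rw [hw1, hwdef]
    rw [div_inv_eq_mul, div_mul_cancel₀ _ hz1]
  rw [hφ (trans2 g), hφ f, aeval_trans2 g z hz1, hdeg, hg1, inv_inv,
    aeval_trans2 f w hw1', hww, hw1, ← hd]
  rw [map_inv₀, inv_pow]
  have hc : algebraMap 𝕜 K (f.eval 1) ≠ 0 := by
    simpa using h1
  have hzp : ((z - 1) ^ d : K) ≠ 0 := pow_ne_zero _ hz1
  rw [mul_left_comm, mul_inv_cancel_left₀ hc, mul_inv_cancel_left₀ hzp]
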